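/- Let 1 < p < ∞, v a weight with (v_{n+1}/v_n) bounded and L := limsup_n v_{n+1}/v_n, and r, s nonzero reals with |r| + L|s| < 1. Then B(r,s)^n → 0 in operator norm on l_p(v). -/

import Mathlib

open scoped ENNReal
open Filter

/-- Auxiliary product of shift coefficients. -/
noncomputable def Gaux (v : ℕ → ℝ) (s : ℝ) (n k : ℕ) : ℝ :=
  ∏ j ∈ Finset.range k, (s * (v (n + j + 1) / v (n + j)))

lemma Gaux_zero (v : ℕ → ℝ) (s : ℝ) (n : ℕ) : Gaux v s n 0 = 1 := by
  simp [Gaux]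

lemma Gaux_succ (v : ℕ → ℝ) (s : ℝ) (n k : ℕ) :
    Gaux v s n (k + 1) = Gaux v s n k * (s * (v (n + k + 1) / v (n + k))) :=
  Finset.prod_range_succ _ _

/-- Key `lp`-norm bound for a "shift by `k` and multiply" sequence. -/
lemma auxnorm {p : ℝ≥0∞} [Fact (1 ≤ p)] (hq : 0 < p.toReal) (k : ℕ)
    (a : ℕ → ℂ) (c : ℝ) (hc : 0 ≤ c) (ha : ∀ n, ‖a n‖ ≤ c)
    (x y : lp (fun _ : ℕ => ℂ) p)
    (hy0 : ∀ m, m < k → (y : ∀ _ : ℕ, ℂ) m = 0)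
    (hyk : ∀ n, (y : ∀ _ : ℕ, ℂ) (n + k) = a n * (x : ∀ _ : ℕ, ℂ) n) :
    ‖y‖ ≤ c * ‖x‖ := by
  set q := p.toReal with hqdef
  have hx : Summable fun n => ‖(x : ∀ _ : ℕ, ℂ) n‖ ^ q := (lp.memℓp x).summable hq
  have hinj : Function.Injective (fun n : ℕ => n + k) := add_left_injective k
  have hsupp : Function.support (fun m => ‖(y : ∀ _ : ℕ, ℂ) m‖ ^ q)
      ⊆ Set.range (fun n : ℕ => n + k) := by
    intro m hm
    by_contra h
    apply hm
    have hmk : m < k := by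
      by_contra h2
      refine h ⟨m - k, ?_⟩
      show m - k + k = m
      omega
    simp [hy0 m hmk, Real.zero_rpow hq.ne']
  have h1 : ‖y‖ ^ q = ∑' n : ℕ, ‖(y : ∀ _ : ℕ, ℂ) (n + k)‖ ^ q := by
    rw [lp.norm_rpow_eq_tsum hq y, ← hinj.tsum_eq hsupp]
  have h2 : ‖y‖ ^ q ≤ c ^ q * ‖x‖ ^ q := by
    rw [h1, lp.norm_rpow_eq_tsum hq x, ← tsum_mul_left]
    refine Summable.tsum_le_tsum (fun n => ?_) ?_ (hx.mul_left _)
    · rw [hyk n, norm_mul, Real.mul_rpow (norm_nonneg _) (norm_nonneg _)]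
      exact mul_le_mul_of_nonneg_right
        (Real.rpow_le_rpow (norm_nonneg _) (ha n) hq.le)
        (Real.rpow_nonneg (norm_nonneg _) q)
    · exact ((lp.memℓp y).summable hq).comp_injective hinj
  have h3 : ‖y‖ ^ q ≤ (c * ‖x‖) ^ q := by
    rw [Real.mul_rpow hc (norm_nonneg _)]; exact h2
  exact (Real.rpow_le_rpow_iff (norm_nonneg y) (mul_nonneg hc (norm_nonneg x)) hq).mp h3

set_option maxHeartbeats 1000000 in
set_option synthInstance.maxHeartbeats 400000 in
/-- For `1 < p < ∞`, a weight `v` with `(v_{n+1}/v_n)` bounded,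
`L := limsup_n v_{n+1}/v_n`, and nonzero reals `r, s` with `|r| + L|s| < 1`, the powers
`B(r,s)^n` tend to `0` in operator norm on `l_p(v)`.  `B(r,s)` on `l_p(v)` is represented
via the isometric isomorphism `T_v` by the conjugated operator `T` on `l_p`. -/
theorem stmt14 (p : ℝ≥0∞) [Fact (1 ≤ p)] (hp1 : 1 < p) (hpt : p ≠ ⊤)
    (v : ℕ → ℝ) (hv : ∀ n, 0 < v n) (hbd : ∃ M : ℝ, ∀ n, v (n + 1) / v n ≤ M)
    (L : ℝ) (hL : L = limsup (fun n => v (n + 1) / v n) atTop)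
    (r s : ℝ) (hr : r ≠ 0) (hs : s ≠ 0) (hrs : |r| + L * |s| < 1)
    (T : lp (fun _ : ℕ => ℂ) p →L[ℂ] lp (fun _ : ℕ => ℂ) p)
    (hT : ∀ x : lp (fun _ : ℕ => ℂ) p,
      (T x : ∀ _ : ℕ, ℂ) 0 = (r : ℂ) * (x : ∀ _ : ℕ, ℂ) 0 ∧
      ∀ n : ℕ, (T x : ∀ _ : ℕ, ℂ) (n + 1)
        = ((s * (v (n + 1) / v n) : ℝ) : ℂ) * (x : ∀ _ : ℕ, ℂ) n
          + (r : ℂ) * (x : ∀ _ : ℕ, ℂ) (n + 1)) :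
    Tendsto (fun n : ℕ => ‖T ^ n‖) atTop (nhds 0) := by
  have hq : 0 < p.toReal := ENNReal.toReal_pos (zero_lt_one.trans hp1).ne' hpt
  obtain ⟨M, hM⟩ := hbd
  have hw : ∀ n, 0 < v (n + 1) / v n := fun n => div_pos (hv _) (hv _)
  have hbdd : IsBoundedUnder (· ≤ ·) atTop (fun n => v (n + 1) / v n) :=
    isBoundedUnder_of ⟨M, hM⟩
  have hL0 : 0 ≤ L := by
    rw [hL]
    exact le_limsup_of_frequently_le
      (Filter.Eventually.frequently (Filter.Eventually.of_forall fun n => (hw n).le)) hbdd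
  have hs0 : 0 < |s| := abs_pos.mpr hs
  set ε : ℝ := (1 - |r| - L * |s|) / (2 * |s|) with hεdef
  clear_value ε
  have hε : 0 < ε := by
    rw [hεdef]
    apply div_pos <;> linarith
  set L' : ℝ := L + ε with hL'def
  clear_value L'
  have hL'0 : 0 < L' := by rw [hL'def]; linarith
  have key : |r| + |s| * L' < 1 := by
    have hsne : |s| ≠ 0 := hs0.ne'
    have h1 : |s| * ε = (1 - |r| - L * |s|) / 2 := by
      rw [hεdef]; field_simp
    have h2 : |s| * L = L * |s| := mul_comm _ _
    rw [hL'def, mul_add]; linarith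
  have hev : ∀ᶠ n in atTop, v (n + 1) / v n < L' :=
    eventually_lt_of_limsup_lt (by rw [← hL, hL'def]; linarith) hbdd
  obtain ⟨N, hN⟩ := eventually_atTop.mp hev
  set B : ℝ := max M L' with hBdef
  clear_value B
  have hB : ∀ n, v (n + 1) / v n ≤ B := by
    intro n
    rw [hBdef]
    exact (hM n).trans (le_max_left _ _)
  have hL'B : L' ≤ B := by rw [hBdef]; exact le_max_right _ _
  have hB0 : 0 < B := lt_of_lt_of_le hL'0 hL'B
  have hBL1 : (1 : ℝ) ≤ B / L' := (one_le_div hL'0).2 hL'B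
  have hprod : ∀ k n, (∏ j ∈ Finset.range k, (v (n + j + 1) / v (n + j)))
      ≤ (B / L') ^ (N - n) * L' ^ k := by
    intro k
    induction k with
    | zero =>
      intro n
      simpa using one_le_pow₀ hBL1
    | succ k ih =>
      intro n
      have hstep : (∏ j ∈ Finset.range (k + 1), (v (n + j + 1) / v (n + j)))
          = (v (n + 1) / v n) *
            ∏ j ∈ Finset.range k, (v ((n + 1) + j + 1) / v ((n + 1) + j)) := by
        rw [Finset.prod_range_succ']
        rw [mul_comm]
        congr 1
        · apply Finset.prod_congr rfl
          intro j _
          have h : n + (j + 1) = n + 1 + j := by omega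
          rw [h]
      rw [hstep]
      have hprodnn : (0 : ℝ) ≤ ∏ j ∈ Finset.range k, (v ((n + 1) + j + 1) / v ((n + 1) + j)) :=
        Finset.prod_nonneg fun j _ => (div_nonneg (hv _).le (hv _).le)
      rcases le_or_gt N n with hn | hn
      · have h1 : v (n + 1) / v n ≤ L' := (hN n hn).le
        have h2 : N - n = 0 := by omega
        have h3 : N - (n + 1) = 0 := by omega
        calc (v (n + 1) / v n) * ∏ j ∈ Finset.range k, (v ((n + 1) + j + 1) / v ((n + 1) + j))
            ≤ L' * ((B / L') ^ (N - (n + 1)) * L' ^ k) :=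
              mul_le_mul h1 (ih (n + 1)) hprodnn hL'0.le
          _ = (B / L') ^ (N - n) * L' ^ (k + 1) := by rw [h2, h3]; ring
      · have h1 : v (n + 1) / v n ≤ B := hB n
        have h2 : N - n = (N - (n + 1)) + 1 := by omega
        have hBL : B / L' * L' = B := div_mul_cancel₀ B hL'0.ne'
        calc (v (n + 1) / v n) * ∏ j ∈ Finset.range k, (v ((n + 1) + j + 1) / v ((n + 1) + j))
            ≤ B * ((B / L') ^ (N - (n + 1)) * L' ^ k) :=
              mul_le_mul h1 (ih (n + 1)) hprodnn hB0.le
          _ = (B / L') ^ (N - n) * L' ^ (k + 1) := by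
              rw [h2, pow_succ, pow_succ, mul_mul_mul_comm, hBL]; ring
  set K : ℝ := (B / L') ^ N with hKdef
  clear_value K
  have hK1 : (1 : ℝ) ≤ K := by rw [hKdef]; exact one_le_pow₀ hBL1
  have hK0 : (0 : ℝ) ≤ K := zero_le_one.trans hK1
  have hprod' : ∀ n k, (∏ j ∈ Finset.range k, (v (n + j + 1) / v (n + j))) ≤ K * L' ^ k := by
    intro n k
    refine (hprod k n).trans (mul_le_mul_of_nonneg_right ?_ (pow_nonneg hL'0.le k))
    rw [hKdef]
    exact pow_le_pow_right₀ hBL1 (Nat.sub_le N n)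
  -- the shift part `S` of `T`
  set S : lp (fun _ : ℕ => ℂ) p →L[ℂ] lp (fun _ : ℕ => ℂ) p := T - (r : ℂ) • 1 with hSdef
  have hScoe : ∀ (x : lp (fun _ : ℕ => ℂ) p) (m : ℕ),
      (S x : ∀ _ : ℕ, ℂ) m = (T x : ∀ _ : ℕ, ℂ) m - (r : ℂ) * (x : ∀ _ : ℕ, ℂ) m := by
    intro x m
    rw [hSdef]
    simp only [ContinuousLinearMap.sub_apply, ContinuousLinearMap.smul_apply,
      ContinuousLinearMap.one_apply, lp.coeFn_sub, lp.coeFn_smul, Pi.sub_apply,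
      Pi.smul_apply, smul_eq_mul]
  have hS0 : ∀ x : lp (fun _ : ℕ => ℂ) p, (S x : ∀ _ : ℕ, ℂ) 0 = 0 := by
    intro x; rw [hScoe x 0, (hT x).1]; ring
  have hSn : ∀ (x : lp (fun _ : ℕ => ℂ) p) (n : ℕ),
      (S x : ∀ _ : ℕ, ℂ) (n + 1) = ((s * (v (n + 1) / v n) : ℝ) : ℂ) * (x : ∀ _ : ℕ, ℂ) n := by
    intro x n; rw [hScoe x (n + 1), (hT x).2 n]; ring
  -- powers of `S` pointwise
  have hSk : ∀ (k : ℕ) (x : lp (fun _ : ℕ => ℂ) p) (m : ℕ),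
      ((S ^ k) x : ∀ _ : ℕ, ℂ) m
        = if k ≤ m then ((Gaux v s (m - k) k : ℝ) : ℂ) * (x : ∀ _ : ℕ, ℂ) (m - k) else 0 := by
    intro k
    induction k with
    | zero =>
      intro x m
      simp [Gaux_zero]
    | succ k ih =>
      intro x m
      have hpow : ((S ^ (k + 1)) x : ∀ _ : ℕ, ℂ) m = ((S ((S ^ k) x)) : ∀ _ : ℕ, ℂ) m := by
        rw [pow_succ', ContinuousLinearMap.mul_apply]
      rw [hpow]
      cases m with
      | zero =>
        rw [hS0, if_neg (by omega)]
      | succ n =>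
        rw [hSn ((S ^ k) x) n, ih x n]
        by_cases hkn : k ≤ n
        · rw [if_pos hkn, if_pos (by omega : k + 1 ≤ n + 1)]
          have hidx : n + 1 - (k + 1) = n - k := by omega
          rw [hidx, Gaux_succ, show n - k + k = n from by omega]
          push_cast
          ring
        · rw [if_neg hkn, if_neg (by omega : ¬ (k + 1 ≤ n + 1))]
          ring
  -- norm bound for powers of `S`
  have hSnorm : ∀ k : ℕ, ‖S ^ k‖ ≤ K * (|s| * L') ^ k := by
    intro k
    have hcnn : (0 : ℝ) ≤ K * (|s| * L') ^ k :=
      mul_nonneg hK0 (pow_nonneg (mul_nonneg (abs_nonneg s) hL'0.le) k)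
    apply ContinuousLinearMap.opNorm_le_bound _ hcnn
    intro x
    apply auxnorm hq k (fun n => ((Gaux v s n k : ℝ) : ℂ)) _ hcnn ?_ x ((S ^ k) x) ?_ ?_
    · intro n
      rw [Complex.norm_real, Real.norm_eq_abs]
      have habs : |Gaux v s n k| = |s| ^ k * ∏ j ∈ Finset.range k, (v (n + j + 1) / v (n + j)) := by
        rw [Gaux, Finset.abs_prod]
        calc (∏ j ∈ Finset.range k, |s * (v (n + j + 1) / v (n + j))|)
            = ∏ j ∈ Finset.range k, (|s| * (v (n + j + 1) / v (n + j))) := by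
              apply Finset.prod_congr rfl
              intro j _
              rw [abs_mul, abs_of_pos (hw (n + j))]
          _ = |s| ^ k * ∏ j ∈ Finset.range k, (v (n + j + 1) / v (n + j)) := by
              rw [Finset.prod_mul_distrib, Finset.prod_const, Finset.card_range]
      rw [habs]
      calc |s| ^ k * ∏ j ∈ Finset.range k, (v (n + j + 1) / v (n + j))
          ≤ |s| ^ k * (K * L' ^ k) :=
            mul_le_mul_of_nonneg_left (hprod' n k) (pow_nonneg (abs_nonneg s) k)
        _ = K * (|s| * L') ^ k := by rw [mul_pow]; ring
    · intro m hm
      rw [hSk k x m, if_neg (by omega)]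
    · intro n
      rw [hSk k x (n + k), if_pos (by omega : k ≤ n + k), show n + k - k = n from by omega]
  -- binomial expansion
  have hTd : T = (r : ℂ) • 1 + S := by rw [hSdef]; simp
  have hcomm : Commute ((r : ℂ) • (1 : lp (fun _ : ℕ => ℂ) p →L[ℂ] lp (fun _ : ℕ => ℂ) p)) S :=
    (Commute.one_left S).smul_left (r : ℂ)
  have hTn : ∀ n : ℕ, ‖T ^ n‖ ≤ K * (|r| + |s| * L') ^ n := by
    intro n
    rw [hTd, hcomm.add_pow]
    calc ‖∑ m ∈ Finset.range (n + 1),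
            ((r : ℂ) • (1 : lp (fun _ : ℕ => ℂ) p →L[ℂ] lp (fun _ : ℕ => ℂ) p)) ^ m
              * S ^ (n - m) * (n.choose m : lp (fun _ : ℕ => ℂ) p →L[ℂ] lp (fun _ : ℕ => ℂ) p)‖
        ≤ ∑ m ∈ Finset.range (n + 1),
            ‖((r : ℂ) • (1 : lp (fun _ : ℕ => ℂ) p →L[ℂ] lp (fun _ : ℕ => ℂ) p)) ^ m
              * S ^ (n - m) * (n.choose m : lp (fun _ : ℕ => ℂ) p →L[ℂ] lp (fun _ : ℕ => ℂ) p)‖ :=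
          norm_sum_le _ _
      _ ≤ ∑ m ∈ Finset.range (n + 1),
            K * (|r| ^ m * (|s| * L') ^ (n - m) * (n.choose m : ℝ)) := by
          apply Finset.sum_le_sum
          intro m _
          have e1 : ((r : ℂ) • (1 : lp (fun _ : ℕ => ℂ) p →L[ℂ] lp (fun _ : ℕ => ℂ) p)) ^ m
              * S ^ (n - m) * (n.choose m : lp (fun _ : ℕ => ℂ) p →L[ℂ] lp (fun _ : ℕ => ℂ) p)
              = (n.choose m) • ((r : ℂ) ^ m • S ^ (n - m)) := by
            rw [smul_pow, one_pow, smul_mul_assoc, one_mul, nsmul_eq_mul,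
              (Nat.cast_commute (n.choose m) _).eq]
          rw [e1]
          calc ‖(n.choose m) • ((r : ℂ) ^ m • S ^ (n - m))‖
              ≤ (n.choose m : ℝ) * ‖(r : ℂ) ^ m • S ^ (n - m)‖ := norm_nsmul_le
            _ = (n.choose m : ℝ) * (|r| ^ m * ‖S ^ (n - m)‖) := by
                rw [norm_smul ((r : ℂ) ^ m) (S ^ (n - m)), norm_pow, Complex.norm_real, Real.norm_eq_abs]
            _ ≤ (n.choose m : ℝ) * (|r| ^ m * (K * (|s| * L') ^ (n - m))) := by
                apply mul_le_mul_of_nonneg_left _ (Nat.cast_nonneg _)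
                exact mul_le_mul_of_nonneg_left (hSnorm _) (pow_nonneg (abs_nonneg r) m)
            _ = K * (|r| ^ m * (|s| * L') ^ (n - m) * (n.choose m : ℝ)) := by ring
      _ = K * (|r| + |s| * L') ^ n := by rw [← Finset.mul_sum, add_pow]
  refine squeeze_zero (fun n => norm_nonneg _) hTn ?_
  have h0 : (0 : ℝ) ≤ |r| + |s| * L' := add_nonneg (abs_nonneg r) (mul_nonneg (abs_nonneg s) hL'0.le)
  have := (tendsto_pow_atTop_nhds_zero_of_lt_one h0 key).const_mul K
  simpa using this
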